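/- Let d ≠ 0, ζ ∈ ℝ, and consider the operator L_{d,ζ} on H²_per([0,2π]; ℝ²) defined by L_{d,ζ}(B₁,B₂) = (-dB₁'' + ζB₁ + B₂, -dB₂'' + ζB₂ - B₁). If (B₁,B₂) ∈ H²_per satisfies L_{d,ζ}(B₁,B₂) = (g₁,g₂) with (g₁,g₂) ∈ L²([0,2π];ℝ²), then ‖(B₁,B₂)‖_{L²} ≤ min{1, 1/(sign(d)·ζ)₊} · ‖(g₁,g₂)‖_{L²}, where x₊ denotes the positive part and 1/0₊ := +∞ (i.e. the bound is min{1, (sign(d)ζ)₊^{-1}}). -/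

import Mathlib

open Real intervalIntegral

lemma cs_aux {P X Y : ℝ} (hX : 0 ≤ X) (hY : 0 ≤ Y)
    (h : ∀ t : ℝ, 0 < t → 2 * t * P ≤ t ^ 2 * X + Y) :
    P ≤ Real.sqrt X * Real.sqrt Y := by
  have hsX := Real.sqrt_nonneg X
  have hsY := Real.sqrt_nonneg Y
  rcases hX.eq_or_lt with hX0 | hX0
  · have hP : P ≤ 0 := by
      by_contra hP
      push_neg at hP
      have := h (Y / (2 * P) + 1) (by positivity)
      rw [← hX0] at this
      have e : 2 * (Y / (2 * P) + 1) * P = Y + 2 * P := by field_simp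
      rw [e] at this
      nlinarith
    nlinarith
  rcases hY.eq_or_lt with hY0 | hY0
  · have hP : P ≤ 0 := by
      by_contra hP
      push_neg at hP
      have := h (P / X) (by positivity)
      rw [← hY0] at this
      have h2 : (P / X) ^ 2 * X = P ^ 2 / X := by field_simp
      rw [h2] at this
      have e : 2 * (P / X) * P = 2 * (P ^ 2 / X) := by field_simp
      rw [e] at this
      have hpos : 0 < P ^ 2 / X := div_pos (by positivity) hX0
      linarith
    nlinarith
  · have hx : Real.sqrt X ^ 2 = X := Real.sq_sqrt hX
    have hy : Real.sqrt Y ^ 2 = Y := Real.sq_sqrt hY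
    have hsX0 : 0 < Real.sqrt X := Real.sqrt_pos.mpr hX0
    have hsY0 : 0 < Real.sqrt Y := Real.sqrt_pos.mpr hY0
    have h1 := h (Real.sqrt Y / Real.sqrt X) (by positivity)
    have h2 : (Real.sqrt Y / Real.sqrt X) ^ 2 * X = Y := by
      rw [div_pow, hx, hy, div_mul_cancel₀]
      exact ne_of_gt hX0
    rw [h2] at h1
    have h3 : 2 * (Real.sqrt Y / Real.sqrt X) * P ≤ 2 * Y := by linarith
    have h4 : 2 * Real.sqrt Y * P ≤ 2 * Y * Real.sqrt X := by
      have h5 := mul_le_mul_of_nonneg_left h3 hsX0.le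
      have e : Real.sqrt X * (2 * (Real.sqrt Y / Real.sqrt X) * P)
          = 2 * Real.sqrt Y * P := by
        field_simp
      rw [e] at h5
      linarith
    nlinarith

set_option maxHeartbeats 1000000 in
theorem stmt_9 (d ζ : ℝ) (hd : d ≠ 0) (B1 B2 g1 g2 : ℝ → ℝ)
    (hB1 : ContDiff ℝ 2 B1) (hB2 : ContDiff ℝ 2 B2)
    (hp1 : Function.Periodic B1 (2 * π)) (hp2 : Function.Periodic B2 (2 * π))
    (hg1 : ∀ x, g1 x = -d * deriv (deriv B1) x + ζ * B1 x + B2 x)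
    (hg2 : ∀ x, g2 x = -d * deriv (deriv B2) x + ζ * B2 x - B1 x) :
    Real.sqrt (∫ x in (0:ℝ)..(2 * π), (B1 x ^ 2 + B2 x ^ 2))
      ≤ (if 0 < Real.sign d * ζ then min 1 (Real.sign d * ζ)⁻¹ else 1) *
        Real.sqrt (∫ x in (0:ℝ)..(2 * π), (g1 x ^ 2 + g2 x ^ 2)) := by
  have hpi : (0:ℝ) < 2 * π := by positivity
  -- differentiability facts
  have hpack : ∀ (B : ℝ → ℝ), ContDiff ℝ 2 B →
      Differentiable ℝ B ∧ Differentiable ℝ (deriv B) ∧ Continuous (deriv (deriv B)) := by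
    intro B hB
    have h := contDiff_succ_iff_deriv.mp (show ContDiff ℝ (1+1) B by norm_num; exact hB)
    exact ⟨h.1, h.2.2.differentiable one_ne_zero, h.2.2.continuous_deriv le_rfl⟩
  obtain ⟨hd1, hd1', hc1''⟩ := hpack B1 hB1
  obtain ⟨hd2, hd2', hc2''⟩ := hpack B2 hB2
  have hcB1 : Continuous B1 := hd1.continuous
  have hcB2 : Continuous B2 := hd2.continuous
  have hcB1' : Continuous (deriv B1) := hd1'.continuous
  have hcB2' : Continuous (deriv B2) := hd2'.continuous
  have hcg1 : Continuous g1 := by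
    have : g1 = fun x => -d * deriv (deriv B1) x + ζ * B1 x + B2 x := funext hg1
    rw [this]; fun_prop
  have hcg2 : Continuous g2 := by
    have : g2 = fun x => -d * deriv (deriv B2) x + ζ * B2 x - B1 x := funext hg2
    rw [this]; fun_prop
  -- periodicity of derivatives
  have hpderiv : ∀ (B : ℝ → ℝ), Function.Periodic B (2 * π) →
      Function.Periodic (deriv B) (2 * π) := by
    intro B hp x
    rw [← deriv_comp_add_const]
    congr 1
    exact funext fun y => hp y
  have hp1' := hpderiv B1 hp1
  have hp2' := hpderiv B2 hp2
  set IB := ∫ x in (0:ℝ)..(2 * π), (B1 x ^ 2 + B2 x ^ 2) with hIBdef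
  set Ig := ∫ x in (0:ℝ)..(2 * π), (g1 x ^ 2 + g2 x ^ 2) with hIgdef
  have hIB0 : 0 ≤ IB := intervalIntegral.integral_nonneg hpi.le (fun x _ => by positivity)
  have hIg0 : 0 ≤ Ig := intervalIntegral.integral_nonneg hpi.le (fun x _ => by positivity)
  -- interval integrability of everything continuous
  have hii : ∀ (f : ℝ → ℝ), Continuous f → IntervalIntegrable f MeasureTheory.volume 0 (2 * π) :=
    fun f hf => hf.intervalIntegrable 0 (2 * π)
  -- Step A : ∫ (g1 B2 - g2 B1) = IB
  have hAder : ∀ x, HasDerivAt (fun x => -d * (deriv B1 x * B2 x - deriv B2 x * B1 x))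
      (g1 x * B2 x - g2 x * B1 x - (B1 x ^ 2 + B2 x ^ 2)) x := by
    intro x
    have h1 : HasDerivAt B1 (deriv B1 x) x := (hd1 x).hasDerivAt
    have h2 : HasDerivAt B2 (deriv B2 x) x := (hd2 x).hasDerivAt
    have h1' : HasDerivAt (deriv B1) (deriv (deriv B1) x) x := (hd1' x).hasDerivAt
    have h2' : HasDerivAt (deriv B2) (deriv (deriv B2) x) x := (hd2' x).hasDerivAt
    have := ((h1'.mul h2).sub (h2'.mul h1)).const_mul (-d)
    refine this.congr_deriv ?_
    rw [hg1 x, hg2 x]; ring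
  have hA : (∫ x in (0:ℝ)..(2 * π), (g1 x * B2 x - g2 x * B1 x)) = IB := by
    have hint : IntervalIntegrable
        (fun x => g1 x * B2 x - g2 x * B1 x - (B1 x ^ 2 + B2 x ^ 2))
        MeasureTheory.volume 0 (2 * π) := hii _ (by fun_prop)
    have h0 := intervalIntegral.integral_eq_sub_of_hasDerivAt
      (fun x _ => hAder x) hint
    have hFper : -d * (deriv B1 (2 * π) * B2 (2 * π) - deriv B2 (2 * π) * B1 (2 * π))
        = -d * (deriv B1 0 * B2 0 - deriv B2 0 * B1 0) := by
      have e1 := hp1 0; have e2 := hp2 0; have e3 := hp1' 0; have e4 := hp2' 0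
      simp only [zero_add] at e1 e2 e3 e4
      rw [e1, e2, e3, e4]
    rw [hFper, sub_self] at h0
    have hsub := intervalIntegral.integral_sub
      (hii (fun x => g1 x * B2 x - g2 x * B1 x) (by fun_prop))
      (hii (fun x => B1 x ^ 2 + B2 x ^ 2) (by fun_prop))
    rw [hsub] at h0
    rw [← hIBdef] at h0
    linarith
  -- Step B : ∫ (g1 B1 + g2 B2) = d * K + ζ * IB
  set K := ∫ x in (0:ℝ)..(2 * π), (deriv B1 x ^ 2 + deriv B2 x ^ 2) with hKdef
  have hK0 : 0 ≤ K := intervalIntegral.integral_nonneg hpi.le (fun x _ => by positivity)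
  have hBder : ∀ x, HasDerivAt (fun x => -d * (deriv B1 x * B1 x + deriv B2 x * B2 x))
      (g1 x * B1 x + g2 x * B2 x
        - (d * (deriv B1 x ^ 2 + deriv B2 x ^ 2) + ζ * (B1 x ^ 2 + B2 x ^ 2))) x := by
    intro x
    have h1 : HasDerivAt B1 (deriv B1 x) x := (hd1 x).hasDerivAt
    have h2 : HasDerivAt B2 (deriv B2 x) x := (hd2 x).hasDerivAt
    have h1' : HasDerivAt (deriv B1) (deriv (deriv B1) x) x := (hd1' x).hasDerivAt
    have h2' : HasDerivAt (deriv B2) (deriv (deriv B2) x) x := (hd2' x).hasDerivAt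
    have := ((h1'.mul h1).add (h2'.mul h2)).const_mul (-d)
    refine this.congr_deriv ?_
    rw [hg1 x, hg2 x]; ring
  have hB : (∫ x in (0:ℝ)..(2 * π), (g1 x * B1 x + g2 x * B2 x)) = d * K + ζ * IB := by
    have hint : IntervalIntegrable
        (fun x => g1 x * B1 x + g2 x * B2 x
          - (d * (deriv B1 x ^ 2 + deriv B2 x ^ 2) + ζ * (B1 x ^ 2 + B2 x ^ 2)))
        MeasureTheory.volume 0 (2 * π) := hii _ (by fun_prop)
    have h0 := intervalIntegral.integral_eq_sub_of_hasDerivAt (fun x _ => hBder x) hint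
    have hFper : -d * (deriv B1 (2 * π) * B1 (2 * π) + deriv B2 (2 * π) * B2 (2 * π))
        = -d * (deriv B1 0 * B1 0 + deriv B2 0 * B2 0) := by
      have e1 := hp1 0; have e2 := hp2 0; have e3 := hp1' 0; have e4 := hp2' 0
      simp only [zero_add] at e1 e2 e3 e4
      rw [e1, e2, e3, e4]
    rw [hFper, sub_self] at h0
    have hsub := intervalIntegral.integral_sub
      (hii (fun x => g1 x * B1 x + g2 x * B2 x) (by fun_prop))
      (hii (fun x => d * (deriv B1 x ^ 2 + deriv B2 x ^ 2) + ζ * (B1 x ^ 2 + B2 x ^ 2))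
        (by fun_prop))
    rw [hsub] at h0
    have hlin : (∫ x in (0:ℝ)..(2 * π),
        (d * (deriv B1 x ^ 2 + deriv B2 x ^ 2) + ζ * (B1 x ^ 2 + B2 x ^ 2)))
        = d * K + ζ * IB := by
      rw [intervalIntegral.integral_add
          (hii _ (by fun_prop)) (hii _ (by fun_prop)),
        intervalIntegral.integral_const_mul, intervalIntegral.integral_const_mul]
    rw [hlin] at h0
    linarith
  -- generic Cauchy-Schwarz-type bound via cs_aux
  have hCS : ∀ (u1 u2 : ℝ → ℝ), Continuous u1 → Continuous u2 →
      (∀ x t, 0 < t → 2 * t * (u1 x * g1 x + u2 x * g2 x)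
        ≤ t ^ 2 * (g1 x ^ 2 + g2 x ^ 2) + (B1 x ^ 2 + B2 x ^ 2)) →
      (∫ x in (0:ℝ)..(2 * π), (u1 x * g1 x + u2 x * g2 x)) ≤ Real.sqrt Ig * Real.sqrt IB := by
    intro u1 u2 hu1 hu2 hpt
    apply cs_aux hIg0 hIB0
    intro t ht
    have hmono := intervalIntegral.integral_mono_on hpi.le
      (hii (fun x => 2 * t * (u1 x * g1 x + u2 x * g2 x)) (by fun_prop))
      (hii (fun x => t ^ 2 * (g1 x ^ 2 + g2 x ^ 2) + (B1 x ^ 2 + B2 x ^ 2)) (by fun_prop))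
      (fun x _ => hpt x t ht)
    have e1 : (∫ x in (0:ℝ)..(2 * π), 2 * t * (u1 x * g1 x + u2 x * g2 x))
        = 2 * t * ∫ x in (0:ℝ)..(2 * π), (u1 x * g1 x + u2 x * g2 x) :=
      intervalIntegral.integral_const_mul (2 * t) (fun x => u1 x * g1 x + u2 x * g2 x)
    have e2 : (∫ x in (0:ℝ)..(2 * π),
        (t ^ 2 * (g1 x ^ 2 + g2 x ^ 2) + (B1 x ^ 2 + B2 x ^ 2)))
        = t ^ 2 * Ig + IB := by
      rw [intervalIntegral.integral_add
        (hii (fun x => t ^ 2 * (g1 x ^ 2 + g2 x ^ 2)) (by fun_prop))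
        (hii (fun x => B1 x ^ 2 + B2 x ^ 2) (by fun_prop))]
      rw [intervalIntegral.integral_const_mul (t ^ 2) (fun x => g1 x ^ 2 + g2 x ^ 2)]
    linarith [hmono, e1.symm.le, e2.le]
  -- b ≤ G
  set b := Real.sqrt IB with hbdef
  set G := Real.sqrt Ig with hGdef
  have hb0 : 0 ≤ b := Real.sqrt_nonneg _
  have hG0 : 0 ≤ G := Real.sqrt_nonneg _
  have hb2 : b ^ 2 = IB := Real.sq_sqrt hIB0
  have hbG : b ≤ G := by
    have h1 : IB ≤ G * b := by
      have := hCS (fun x => B2 x) (fun x => -B1 x) (by fun_prop) (by fun_prop)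
        (fun x t ht => by nlinarith [sq_nonneg (t * g1 x - B2 x), sq_nonneg (t * g2 x + B1 x)])
      have heq : (∫ x in (0:ℝ)..(2 * π), (B2 x * g1 x + -B1 x * g2 x))
          = ∫ x in (0:ℝ)..(2 * π), (g1 x * B2 x - g2 x * B1 x) := by
        congr 1; ext x; ring
      rw [heq, hA] at this
      exact this
    rcases hb0.eq_or_lt with hb | hb
    · rw [← hb]; exact hG0
    · nlinarith
  show b ≤ (if 0 < Real.sign d * ζ then min 1 (Real.sign d * ζ)⁻¹ else 1) * G
  split_ifs with hsz
  · -- 0 < sign d * ζ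
    have hP2u : (∫ x in (0:ℝ)..(2 * π), (g1 x * B1 x + g2 x * B2 x)) ≤ G * b := by
      have := hCS (fun x => B1 x) (fun x => B2 x) (by fun_prop) (by fun_prop)
        (fun x t ht => by nlinarith [sq_nonneg (t * g1 x - B1 x), sq_nonneg (t * g2 x - B2 x)])
      have heq : (∫ x in (0:ℝ)..(2 * π), (B1 x * g1 x + B2 x * g2 x))
          = ∫ x in (0:ℝ)..(2 * π), (g1 x * B1 x + g2 x * B2 x) := by
        congr 1; ext x; ring
      rw [heq] at this; exact this
    have hP2l : -(∫ x in (0:ℝ)..(2 * π), (g1 x * B1 x + g2 x * B2 x)) ≤ G * b := by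
      have := hCS (fun x => -B1 x) (fun x => -B2 x) (by fun_prop) (by fun_prop)
        (fun x t ht => by nlinarith [sq_nonneg (t * g1 x + B1 x), sq_nonneg (t * g2 x + B2 x)])
      have heq : (∫ x in (0:ℝ)..(2 * π), (-B1 x * g1 x + -B2 x * g2 x))
          = -∫ x in (0:ℝ)..(2 * π), (g1 x * B1 x + g2 x * B2 x) := by
        rw [← intervalIntegral.integral_neg]
        congr 1; ext x; ring
      rw [heq] at this; exact this
    have hs1 : Real.sign d = 1 ∨ Real.sign d = -1 := by
      rcases hd.lt_or_gt with h | h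
      · right; exact Real.sign_of_neg h
      · left; exact Real.sign_of_pos h
    have hsd : 0 ≤ Real.sign d * d := by
      rcases hd.lt_or_gt with h | h
      · rw [Real.sign_of_neg h]; nlinarith
      · rw [Real.sign_of_pos h]; nlinarith
    have hmain : Real.sign d * ζ * IB ≤ G * b := by
      have h1 : Real.sign d * ζ * IB ≤ Real.sign d * (d * K + ζ * IB) := by
        nlinarith
      rw [← hB] at h1
      rcases hs1 with hs | hs
      · rw [hs, one_mul] at h1 ⊢; linarith [hP2u]
      · rw [hs] at h1 ⊢; linarith [hP2l]
    have hinv : b ≤ (Real.sign d * ζ)⁻¹ * G := by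
      rcases hb0.eq_or_lt with hb | hb
      · rw [← hb]; positivity
      · rw [← hb2] at hmain
        have h2 : Real.sign d * ζ * b ≤ G := by nlinarith
        calc b = (Real.sign d * ζ)⁻¹ * (Real.sign d * ζ * b) := by
                  rw [← mul_assoc, inv_mul_cancel₀ hsz.ne', one_mul]
          _ ≤ (Real.sign d * ζ)⁻¹ * G :=
                  mul_le_mul_of_nonneg_left h2 (by positivity)
    rw [min_mul_of_nonneg _ _ hG0]
    exact le_min (by rwa [one_mul]) hinv
  · rw [one_mul]; exact hbG
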